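/- arXiv:2511.18876 — 5 statements merged into one kernel-verified Lean document; each statement's English description precedes it below -/
import Mathlib

section
/- Let Z be a binomial random variable with parameters N and p, with the convention 0/0 = 0. Then E[1(Z ≥ 1)/Z] ≤ 2/((N+1)p). -/
open Finset

/-- If `Z ~ Bin(N, p)` with `p ∈ (0,1]`, then `E[1(Z ≥ 1)/Z] ≤ 2/((N+1)p)`,
with the convention that `1(Z ≥ 1)/Z = 0` when `Z = 0`. -/
theorem binomial_indicator_inv_expectation_le
    (N : ℕ) (p : ℝ) (hp0 : 0 < p) (hp1 : p ≤ 1) :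
    ∑ k ∈ Finset.range (N + 1),
      (N.choose k : ℝ) * p ^ k * (1 - p) ^ (N - k) *
        (if 1 ≤ k then 1 / (k : ℝ) else 0)
      ≤ 2 / ((N + 1 : ℝ) * p) := by
  have hq : 0 ≤ 1 - p := by linarith
  have hNp : 0 < ((N : ℝ) + 1) * p := by positivity
  set c : ℝ := 2 / ((N + 1 : ℝ) * p) with hc
  have hc0 : 0 ≤ c := by positivity
  have hstep : ∀ k ∈ range (N + 1),
      (N.choose k : ℝ) * p ^ k * (1 - p) ^ (N - k) *
        (if 1 ≤ k then 1 / (k : ℝ) else 0)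
      ≤ c * (((N+1).choose (k+1) : ℝ) * p ^ (k+1) * (1 - p) ^ (N + 1 - (k+1))) := by
    intro k hk
    rcases Nat.eq_zero_or_pos k with rfl | hk1
    · simp only [if_neg (by norm_num : ¬ (1 ≤ 0))]
      rw [mul_zero]
      positivity
    · have hk1 : 1 ≤ k := hk1
      rw [if_pos hk1]
      have hC : (((N+1).choose (k+1) : ℝ)) * (k+1) = ((N:ℝ)+1) * (N.choose k : ℝ) := by
        exact_mod_cast congrArg (Nat.cast (R := ℝ)) (Nat.add_one_mul_choose_eq N k).symm
      have hksucc : N + 1 - (k+1) = N - k := by omega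
      rw [hksucc]
      have hk0 : (0:ℝ) < k := by exact_mod_cast hk1
      have hk1' : (1:ℝ) ≤ k := by exact_mod_cast hk1
      have hterm : (0:ℝ) ≤ (N.choose k : ℝ) * p ^ k * (1 - p) ^ (N - k) := by positivity
      have h1 : (1:ℝ) / k ≤ 2 / ((k:ℝ)+1) := by
        rw [div_le_div_iff₀ hk0 (by linarith)]
        linarith
      have h2 : (N.choose k : ℝ) * p ^ k * (1 - p) ^ (N - k) * (2 / ((k:ℝ)+1))
          = c * (((N+1).choose (k+1) : ℝ) * p ^ (k+1) * (1 - p) ^ (N - k)) := by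
        rw [hc, pow_succ]
        field_simp
        linear_combination (-(1 - p) ^ (N - k)) * hC
      calc (N.choose k : ℝ) * p ^ k * (1 - p) ^ (N - k) * (1 / (k:ℝ))
          ≤ (N.choose k : ℝ) * p ^ k * (1 - p) ^ (N - k) * (2 / ((k:ℝ)+1)) :=
            mul_le_mul_of_nonneg_left h1 hterm
        _ = c * (((N+1).choose (k+1) : ℝ) * p ^ (k+1) * (1 - p) ^ (N - k)) := h2
  have hsum1 : ∑ j ∈ range (N+2), ((N+1).choose j : ℝ) * p ^ j * (1-p) ^ (N+1-j) ≤ 1 := by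
    have hb : ∑ j ∈ range (N+2), ((N+1).choose j : ℝ) * p ^ j * (1-p) ^ (N+1-j)
        = (p + (1-p)) ^ (N+1) := by
      rw [add_pow]
      exact Finset.sum_congr rfl fun j _ => by ring
    rw [hb]
    norm_num
  have hsub : ∑ k ∈ range (N+1), ((N+1).choose (k+1) : ℝ) * p ^ (k+1) * (1-p) ^ (N+1-(k+1)) ≤ 1 := by
    have h := Finset.sum_range_succ' (fun j => ((N+1).choose j : ℝ) * p ^ j * (1-p) ^ (N+1-j)) (N+1)
    have h0 : (0:ℝ) ≤ ((N+1).choose 0 : ℝ) * p ^ 0 * (1-p) ^ (N+1-0) := by positivity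
    calc ∑ k ∈ range (N+1), ((N+1).choose (k+1) : ℝ) * p ^ (k+1) * (1-p) ^ (N+1-(k+1))
        ≤ ∑ j ∈ range (N+2), ((N+1).choose j : ℝ) * p ^ j * (1-p) ^ (N+1-j) := by
          rw [h]; linarith
      _ ≤ 1 := hsum1
  calc ∑ k ∈ Finset.range (N + 1),
      (N.choose k : ℝ) * p ^ k * (1 - p) ^ (N - k) * (if 1 ≤ k then 1 / (k : ℝ) else 0)
      ≤ ∑ k ∈ range (N+1), c * (((N+1).choose (k+1) : ℝ) * p ^ (k+1) * (1 - p) ^ (N + 1 - (k+1))) :=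
        Finset.sum_le_sum hstep
    _ = c * ∑ k ∈ range (N+1), ((N+1).choose (k+1) : ℝ) * p ^ (k+1) * (1 - p) ^ (N + 1 - (k+1)) := by
        rw [Finset.mul_sum]
    _ ≤ c * 1 := by apply mul_le_mul_of_nonneg_left hsub hc0
    _ = c := mul_one c
end

section
/- Let x ∈ ℝⁿ, β > 0, M = max_j x_j, A = {j : x_j = M}, and γ = min_{j ∉ A} (M − x_j) if A ≠ [n] (γ = +∞ otherwise). Then for every i ∈ [n], |softmax_β(x)_i − (1/|A|)·1(i ∈ A)| ≤ max{1/|A|, (n − |A|)/|A|²}·exp(−γ/β). -/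
open Real Finset

/-- Softmax converges exponentially fast to the uniform distribution on the argmax set:
with `M = max_j x_j`, `A = {j : x_j = M}` and `γ = min_{j ∉ A}(M − x_j)` (the bound being
`0` when `A = [n]`, corresponding to `γ = +∞`), for every `i`,
`|softmax_β(x)_i − 1(i ∈ A)/|A|| ≤ max{1/|A|, (n−|A|)/|A|²}·exp(−γ/β)`. -/
theorem softmax_argmax_bound (n : ℕ) [NeZero n] (x : Fin n → ℝ) (β : ℝ) (hβ : 0 < β) :
    ∀ i : Fin n,
      letI M : ℝ := Finset.univ.sup' Finset.univ_nonempty x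
      letI A : Finset (Fin n) := Finset.univ.filter (fun j => x j = M)
      |Real.exp (x i / β) / (∑ j, Real.exp (x j / β)) -
          (if i ∈ A then 1 / (A.card : ℝ) else 0)|
        ≤ if hA : A = Finset.univ then 0
          else
            max (1 / (A.card : ℝ)) (((n : ℝ) - A.card) / (A.card : ℝ) ^ 2) *
              Real.exp
                (-(Finset.univ \ A).inf'
                    (Finset.sdiff_nonempty.mpr fun hsub =>
                      hA (Finset.univ_subset_iff.mp hsub))
                    (fun j => M - x j) / β) := by
  intro i
  set M : ℝ := Finset.univ.sup' Finset.univ_nonempty x with hMdef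
  set A : Finset (Fin n) := Finset.univ.filter (fun j => x j = M) with hAdef
  have hMle : ∀ j, x j ≤ M := fun j => Finset.le_sup' x (Finset.mem_univ j)
  obtain ⟨j₀, -, hj₀⟩ := Finset.exists_mem_eq_sup' Finset.univ_nonempty x
  have hAne : A.Nonempty := ⟨j₀, Finset.mem_filter.mpr ⟨Finset.mem_univ _, hj₀.symm⟩⟩
  have hacard : 0 < (A.card : ℝ) := by exact_mod_cast Finset.card_pos.mpr hAne
  set e : Fin n → ℝ := fun j => Real.exp ((x j - M) / β) with he
  have hepos : ∀ j, 0 < e j := fun j => Real.exp_pos _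
  have heA : ∀ j ∈ A, e j = 1 := by
    intro j hj
    have hx : x j = M := (Finset.mem_filter.mp hj).2
    simp [he, hx]
  set R : ℝ := ∑ j ∈ Finset.univ \ A, e j with hR
  have hRnonneg : 0 ≤ R := Finset.sum_nonneg fun j _ => (hepos j).le
  have hT : ∑ j, e j = (A.card : ℝ) + R := by
    rw [← Finset.sum_sdiff (Finset.subset_univ A), Finset.sum_congr rfl heA,
      Finset.sum_const, nsmul_eq_mul, mul_one]
    ring
  have hTpos : 0 < (A.card : ℝ) + R := by linarith
  have hsm : Real.exp (x i / β) / (∑ j, Real.exp (x j / β)) = e i / ((A.card : ℝ) + R) := by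
    have h1 : ∀ j, Real.exp (x j / β) = Real.exp (M / β) * e j := by
      intro j
      rw [he, ← Real.exp_add]
      ring_nf
    rw [h1 i, Finset.sum_congr rfl (fun j _ => h1 j), ← Finset.mul_sum, hT,
      mul_div_mul_left _ _ (Real.exp_ne_zero _)]
  by_cases hA : A = Finset.univ
  · rw [dif_pos hA]
    have hiA : i ∈ A := hA ▸ Finset.mem_univ i
    have hR0 : R = 0 := by simp [hR, hA]
    rw [hsm, if_pos hiA, heA i hiA, hR0]
    simp [hAdef]
  · rw [dif_neg hA]
    have hsd : (Finset.univ \ A).Nonempty :=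
      Finset.sdiff_nonempty.mpr fun hsub => hA (Finset.univ_subset_iff.mp hsub)
    set γ : ℝ := (Finset.univ \ A).inf' hsd (fun j => M - x j) with hγ
    set ε : ℝ := Real.exp (-γ / β) with hε
    have hεpos : 0 < ε := Real.exp_pos _
    have heε : ∀ j ∈ Finset.univ \ A, e j ≤ ε := by
      intro j hj
      have hγle : γ ≤ M - x j := Finset.inf'_le _ hj
      apply Real.exp_le_exp.mpr
      rw [div_le_div_iff_of_pos_right hβ]
      linarith
    have hcard_le : A.card ≤ n := by
      simpa using Finset.card_le_card (Finset.subset_univ A)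
    have hRle : R ≤ ((n : ℝ) - A.card) * ε := by
      calc R ≤ ∑ _j ∈ Finset.univ \ A, ε := Finset.sum_le_sum heε
        _ = ((Finset.univ \ A).card : ℝ) * ε := by rw [Finset.sum_const, nsmul_eq_mul]
        _ = ((n : ℝ) - A.card) * ε := by
            rw [Finset.card_sdiff_of_subset (Finset.subset_univ A), Finset.card_univ, Fintype.card_fin,
              Nat.cast_sub hcard_le]
    have hmax1 : 1 / (A.card : ℝ) ≤ max (1 / (A.card : ℝ)) (((n : ℝ) - A.card) / (A.card : ℝ) ^ 2) :=
      le_max_left _ _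
    have hmax2 : ((n : ℝ) - A.card) / (A.card : ℝ) ^ 2 ≤
        max (1 / (A.card : ℝ)) (((n : ℝ) - A.card) / (A.card : ℝ) ^ 2) := le_max_right _ _
    rw [hsm]
    by_cases hi : i ∈ A
    · rw [if_pos hi, heA i hi]
      have h1 : 1 / ((A.card : ℝ) + R) ≤ 1 / (A.card : ℝ) :=
        one_div_le_one_div_of_le hacard (by linarith)
      have habs : |1 / ((A.card : ℝ) + R) - 1 / (A.card : ℝ)|
          = 1 / (A.card : ℝ) - 1 / ((A.card : ℝ) + R) := by
        rw [abs_of_nonpos (by linarith)]; ring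
      rw [habs]
      have hval : 1 / (A.card : ℝ) - 1 / ((A.card : ℝ) + R)
          = R / ((A.card : ℝ) * ((A.card : ℝ) + R)) := by
        field_simp
        ring
      rw [hval]
      have hb1 : R / ((A.card : ℝ) * ((A.card : ℝ) + R)) ≤ R / (A.card : ℝ) ^ 2 := by
        apply div_le_div_of_nonneg_left hRnonneg (by positivity)
        nlinarith
      have hb2 : R / (A.card : ℝ) ^ 2 ≤ (((n : ℝ) - A.card) / (A.card : ℝ) ^ 2) * ε := by
        rw [div_mul_eq_mul_div]
        gcongr
      calc R / ((A.card : ℝ) * ((A.card : ℝ) + R)) ≤ R / (A.card : ℝ) ^ 2 := hb1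
        _ ≤ (((n : ℝ) - A.card) / (A.card : ℝ) ^ 2) * ε := hb2
        _ ≤ _ := mul_le_mul_of_nonneg_right hmax2 hεpos.le
    · rw [if_neg hi, sub_zero, abs_of_pos (by positivity)]
      have hiε : e i ≤ ε := heε i (Finset.mem_sdiff.mpr ⟨Finset.mem_univ _, hi⟩)
      have hb : e i / ((A.card : ℝ) + R) ≤ ε / (A.card : ℝ) := by
        exact div_le_div₀ hεpos.le hiε hacard (by linarith)
      calc e i / ((A.card : ℝ) + R) ≤ ε / (A.card : ℝ) := hb
        _ = (1 / (A.card : ℝ)) * ε := by ring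
        _ ≤ _ := mul_le_mul_of_nonneg_right hmax1 hεpos.le
end

section
/- Let x ∈ ℝⁿ, β > 0, M = max_j x_j, A = {j : x_j = M} with A ≠ [n], and γ = min_{j ∉ A}(M − x_j). Then for each i ∉ A, 0 ≤ softmax_β(x)_i ≤ exp(−γ/β)/|A|. -/
open Real Finset

/-- If `A = {j : x_j = M}` is a proper subset of `[n]` and `γ = min_{j∉A}(M − x_j)`,
then for each `i ∉ A`, `0 ≤ softmax_β(x)_i ≤ exp(−γ/β)/|A|`. -/
theorem softmax_off_argmax_bound (n : ℕ) [NeZero n] (x : Fin n → ℝ) (β : ℝ) (hβ : 0 < β)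
    (A : Finset (Fin n))
    (hA : A = Finset.univ.filter
      (fun j => x j = Finset.univ.sup' Finset.univ_nonempty x))
    (hAne : A ≠ Finset.univ)
    (hcompl : (Finset.univ \ A).Nonempty)
    (γ : ℝ)
    (hγ : γ = (Finset.univ \ A).inf' hcompl
      (fun j => Finset.univ.sup' Finset.univ_nonempty x - x j)) :
    ∀ i : Fin n, i ∉ A →
      0 ≤ Real.exp (x i / β) / (∑ j, Real.exp (x j / β)) ∧
      Real.exp (x i / β) / (∑ j, Real.exp (x j / β))
        ≤ Real.exp (-γ / β) / (A.card : ℝ) := by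
  intro i hi
  set M := Finset.univ.sup' Finset.univ_nonempty x with hM
  -- denominator positivity
  have hsumpos : (0:ℝ) < ∑ j, Real.exp (x j / β) :=
    Finset.sum_pos (fun j _ => Real.exp_pos _) Finset.univ_nonempty
  refine ⟨div_nonneg (Real.exp_pos _).le hsumpos.le, ?_⟩
  -- A nonempty: the argmax is in A
  obtain ⟨k, hk⟩ := Finset.exists_mem_eq_sup' Finset.univ_nonempty x
  have hkA : k ∈ A := by
    rw [hA]; simp [hk.2.symm]; rfl
  have hcard : (0:ℝ) < (A.card : ℝ) := by
    exact_mod_cast Finset.card_pos.mpr ⟨k, hkA⟩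
  -- xi ≤ M - γ
  have hiγ : γ ≤ M - x i := by
    rw [hγ]
    exact Finset.inf'_le _ (by simp [hi])
  -- sum lower bound: ∑ ≥ |A| * exp(M/β)
  have hlow : (A.card : ℝ) * Real.exp (M / β) ≤ ∑ j, Real.exp (x j / β) := by
    have h1 : ∑ j ∈ A, Real.exp (x j / β) = (A.card : ℝ) * Real.exp (M / β) := by
      rw [Finset.sum_congr rfl (fun j hj => ?_), Finset.sum_const, nsmul_eq_mul]
      rw [hA] at hj
      simp only [Finset.mem_filter] at hj
      rw [hj.2]
    rw [← h1]
    exact Finset.sum_le_sum_of_subset_of_nonneg (Finset.subset_univ A)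
      (fun j _ _ => (Real.exp_pos _).le)
  -- numerator bound
  have hnum : Real.exp (x i / β) ≤ Real.exp (-γ / β) * Real.exp (M / β) := by
    rw [← Real.exp_add]
    apply Real.exp_le_exp.mpr
    rw [← add_div]
    gcongr
    linarith
  have hexpM : (0:ℝ) < Real.exp (M / β) := Real.exp_pos _
  rw [div_le_div_iff₀ hsumpos hcard]
  calc Real.exp (x i / β) * (A.card : ℝ)
      ≤ (Real.exp (-γ / β) * Real.exp (M / β)) * (A.card : ℝ) := by
        exact mul_le_mul_of_nonneg_right hnum hcard.le
    _ = Real.exp (-γ / β) * ((A.card : ℝ) * Real.exp (M / β)) := by ring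
    _ ≤ Real.exp (-γ / β) * (∑ j, Real.exp (x j / β)) :=
        mul_le_mul_of_nonneg_left hlow (Real.exp_pos _).le
end

section
/- Let x ∈ ℝⁿ, β > 0, M = max_j x_j, A = {j : x_j = M}. Then for each i ∈ A, softmax_β(x)_i = 1/(|A| + ∑_{j ∉ A} exp(−(M − x_j)/β)), and consequently 1/|A| − softmax_β(x)_i ≤ ((n − |A|)/|A|²)·exp(−γ/β) where γ = min_{j∉A}(M − x_j) (with γ = +∞, i.e. the bound 0, when A = [n]). -/
open Real Finset

/-- For `i` in the argmax set `A` of `x`,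
`softmax_β(x)_i = 1/(|A| + ∑_{j∉A} exp(−(M − x_j)/β))`, and consequently
`1/|A| − softmax_β(x)_i ≤ ((n−|A|)/|A|²)·exp(−γ/β)` where `γ = min_{j∉A}(M − x_j)`
(the bound being `0` when `A = [n]`, corresponding to `γ = +∞`). -/
theorem softmax_on_argmax_formula_and_bound
    (n : ℕ) [NeZero n] (x : Fin n → ℝ) (β : ℝ) (hβ : 0 < β) :
    ∀ i : Fin n,
      letI M : ℝ := Finset.univ.sup' Finset.univ_nonempty x
      letI A : Finset (Fin n) := Finset.univ.filter (fun j => x j = M)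
      i ∈ A →
      Real.exp (x i / β) / (∑ j, Real.exp (x j / β))
        = 1 / ((A.card : ℝ) + ∑ j ∈ Finset.univ \ A, Real.exp (-(M - x j) / β)) ∧
      1 / (A.card : ℝ) - Real.exp (x i / β) / (∑ j, Real.exp (x j / β))
        ≤ if hA : A = Finset.univ then 0
          else
            ((n : ℝ) - A.card) / (A.card : ℝ) ^ 2 *
              Real.exp
                (-(Finset.univ \ A).inf'
                    (Finset.sdiff_nonempty.mpr fun hsub =>
                      hA (Finset.univ_subset_iff.mp hsub))
                    (fun j => M - x j) / β) := by
  intro i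
  set M : ℝ := Finset.univ.sup' Finset.univ_nonempty x with hM
  set A : Finset (Fin n) := Finset.univ.filter (fun j => x j = M) with hA
  intro hiA
  have hxi : x i = M := (Finset.mem_filter.mp hiA).2
  set S : ℝ := ∑ j ∈ Finset.univ \ A, Real.exp (-(M - x j) / β) with hS
  have hS0 : 0 ≤ S := Finset.sum_nonneg fun j _ => (Real.exp_pos _).le
  have hcard : 0 < A.card := Finset.card_pos.mpr ⟨i, hiA⟩
  have hcardR : (0:ℝ) < A.card := by exact_mod_cast hcard
  have hexpM : 0 < Real.exp (M / β) := Real.exp_pos _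
  -- total sum decomposition
  have hsum : (∑ j, Real.exp (x j / β))
      = Real.exp (M / β) * ((A.card : ℝ) + S) := by
    rw [← Finset.sum_filter_add_sum_filter_not Finset.univ (fun j => x j = M)]
    have h1 : ∑ j ∈ Finset.univ.filter (fun j => x j = M), Real.exp (x j / β)
        = (A.card : ℝ) * Real.exp (M / β) := by
      rw [Finset.sum_congr rfl (fun j hj => by
        rw [(Finset.mem_filter.mp hj).2]), Finset.sum_const, nsmul_eq_mul]
    have h2 : Finset.univ.filter (fun j => ¬ x j = M) = Finset.univ \ A := by
      rw [hA, Finset.sdiff_eq_filter]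
      apply Finset.filter_congr
      intro j _
      simp
    have h3 : ∑ j ∈ Finset.univ \ A, Real.exp (x j / β)
        = Real.exp (M / β) * S := by
      rw [hS, Finset.mul_sum]
      apply Finset.sum_congr rfl
      intro j _
      rw [← Real.exp_add]
      ring_nf
    rw [h1, h2, h3]
    ring
  have hformula : Real.exp (x i / β) / (∑ j, Real.exp (x j / β))
      = 1 / ((A.card : ℝ) + S) := by
    rw [hxi, hsum, ← div_div, div_self hexpM.ne']
  refine ⟨hformula, ?_⟩
  rw [hformula]
  by_cases hAu : A = Finset.univ
  · rw [dif_pos hAu]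
    have : S = 0 := by rw [hS, hAu, Finset.sdiff_self, Finset.sum_empty]
    rw [this, add_zero, sub_self]
  · rw [dif_neg hAu]
    have hne : (Finset.univ \ A).Nonempty := Finset.sdiff_nonempty.mpr
      fun hsub => hAu (Finset.univ_subset_iff.mp hsub)
    set γ : ℝ := (Finset.univ \ A).inf' hne (fun j => M - x j) with hγ
    -- inf' for the two proofs must agree
    have hdiff : 1 / (A.card : ℝ) - 1 / ((A.card : ℝ) + S)
        = S / ((A.card : ℝ) * ((A.card : ℝ) + S)) := by
      field_simp
      ring
    rw [hdiff]
    have hSbound : S ≤ ((n : ℝ) - A.card) * Real.exp (-γ / β) := by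
      have hcard' : (Finset.univ \ A).card = n - A.card := by
        rw [Finset.card_sdiff_of_subset (Finset.subset_univ A), Finset.card_univ, Fintype.card_fin]
      have : ((n : ℝ) - A.card) = ((Finset.univ \ A).card : ℝ) := by
        rw [hcard', Nat.cast_sub (by simpa using Finset.card_le_univ A)]
      rw [this]
      calc S ≤ ∑ j ∈ Finset.univ \ A, Real.exp (-γ / β) := by
              apply Finset.sum_le_sum
              intro j hj
              apply Real.exp_le_exp.mpr
              have hγj : γ ≤ M - x j := Finset.inf'_le _ hj
              apply div_le_div_of_nonneg_right (by linarith) hβ.le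
        _ = ((Finset.univ \ A).card : ℝ) * Real.exp (-γ / β) := by
              rw [Finset.sum_const, nsmul_eq_mul]
    calc S / ((A.card : ℝ) * ((A.card : ℝ) + S))
        ≤ S / ((A.card : ℝ) * (A.card : ℝ)) := by
          apply div_le_div_of_nonneg_left hS0 (mul_pos hcardR hcardR)
          apply mul_le_mul_of_nonneg_left _ hcardR.le
          linarith
      _ = S / (A.card : ℝ) ^ 2 := by ring_nf
      _ ≤ ((n : ℝ) - A.card) * Real.exp (-γ / β) / (A.card : ℝ) ^ 2 := by
          exact div_le_div_of_nonneg_right hSbound (sq_nonneg _)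
      _ = ((n : ℝ) - A.card) / (A.card : ℝ) ^ 2 * Real.exp (-γ / β) := by ring
end

section
/- The function softmax_β : ℝ^K → ℝ^K, z ↦ (exp(z_k/β)/∑_j exp(z_j/β))_k, is (1/β)-Lipschitz from (ℝ^K, ‖·‖_∞) to (ℝ^K, ‖·‖_1), i.e., ‖softmax_β(z) − softmax_β(z')‖₁ ≤ (1/β)‖z − z'‖_∞ for all z, z' ∈ ℝ^K. -/
open Real Finset

/-- Weighted variance bound: for a probability vector `p`, bounded `u` and signs `s`,
`|∑ s k * p k * (u k - mean)| ≤ c`. -/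
lemma softmax_aux_alg (K : ℕ) [NeZero K] (p u s : Fin K → ℝ) (c : ℝ)
    (hp : ∀ k, 0 ≤ p k) (hp1 : ∑ k, p k = 1)
    (hu : ∀ k, |u k| ≤ c) (hs : ∀ k, |s k| ≤ 1) :
    |∑ k, s k * p k * (u k - ∑ j, p j * u j)| ≤ c := by
  have hc : 0 ≤ c := le_trans (abs_nonneg _) (hu ⟨0, Nat.pos_of_ne_zero (NeZero.ne K)⟩)
  set m := ∑ j, p j * u j with hm
  set A := ∑ k, p k * |u k - m| with hA
  have h1 : |∑ k, s k * p k * (u k - m)| ≤ A := by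
    refine le_trans (Finset.abs_sum_le_sum_abs _ _) ?_
    apply Finset.sum_le_sum
    intro k _
    rw [abs_mul, abs_mul, abs_of_nonneg (hp k)]
    calc |s k| * p k * |u k - m| ≤ 1 * p k * |u k - m| := by
          apply mul_le_mul_of_nonneg_right (mul_le_mul_of_nonneg_right (hs k) (hp k)) (abs_nonneg _)
      _ = p k * |u k - m| := by ring
  have hA0 : 0 ≤ A := Finset.sum_nonneg fun k _ => mul_nonneg (hp k) (abs_nonneg _)
  have hCS : A ^ 2 ≤ ∑ k, p k * (u k - m) ^ 2 := by
    have := Finset.sum_mul_sq_le_sq_mul_sq Finset.univ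
      (fun k => Real.sqrt (p k)) (fun k => Real.sqrt (p k) * |u k - m|)
    have e1 : ∀ k : Fin K, Real.sqrt (p k) * (Real.sqrt (p k) * |u k - m|) = p k * |u k - m| := by
      intro k; rw [← mul_assoc, Real.mul_self_sqrt (hp k)]
    have e2 : ∀ k : Fin K, Real.sqrt (p k) ^ 2 = p k := fun k => Real.sq_sqrt (hp k)
    have e3 : ∀ k : Fin K, (Real.sqrt (p k) * |u k - m|) ^ 2 = p k * (u k - m) ^ 2 := by
      intro k; rw [mul_pow, e2, sq_abs]
    simp only [e1, e3] at this
    calc A ^ 2 ≤ (∑ k, Real.sqrt (p k) ^ 2) * ∑ k, p k * (u k - m) ^ 2 := by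
          convert this using 2
      _ = ∑ k, p k * (u k - m) ^ 2 := by simp only [e2, hp1, one_mul]
  have hvar : ∑ k, p k * (u k - m) ^ 2 ≤ c ^ 2 := by
    have expand : ∑ k, p k * (u k - m) ^ 2 = (∑ k, p k * u k ^ 2) - m ^ 2 := by
      have : ∀ k : Fin K, p k * (u k - m) ^ 2
          = p k * u k ^ 2 - 2 * m * (p k * u k) + m ^ 2 * p k := by intro k; ring
      simp only [this, Finset.sum_add_distrib, Finset.sum_sub_distrib,
        ← Finset.mul_sum, ← hm, hp1]
      ring
    rw [expand]
    have h2 : ∑ k, p k * u k ^ 2 ≤ c ^ 2 := by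
      calc ∑ k, p k * u k ^ 2 ≤ ∑ k, p k * c ^ 2 := by
            apply Finset.sum_le_sum; intro k _
            exact mul_le_mul_of_nonneg_left (by
              rw [← sq_abs]; exact pow_le_pow_left₀ (abs_nonneg _) (hu k) 2) (hp k)
        _ = c ^ 2 := by rw [← Finset.sum_mul, hp1, one_mul]
    nlinarith [sq_nonneg m]
  have : A ≤ c := by nlinarith
  linarith

/-- The softmax (at inverse temperature 1) is 1-Lipschitz from `‖·‖_∞` to `‖·‖₁`. -/
lemma softmax_key (K : ℕ) [NeZero K] (x y : Fin K → ℝ) (c : ℝ)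
    (hc : ∀ k, |x k - y k| ≤ c) :
    ∑ k, |Real.exp (x k) / (∑ j, Real.exp (x j)) -
          Real.exp (y k) / (∑ j, Real.exp (y j))| ≤ c := by
  set u : Fin K → ℝ := fun k => x k - y k with hu
  set E : ℝ → Fin K → ℝ := fun t k => Real.exp (y k + t * u k) with hE
  set S : ℝ → ℝ := fun t => ∑ j, E t j with hS
  have hSpos : ∀ t, 0 < S t := fun t =>
    Finset.sum_pos (fun j _ => Real.exp_pos _) Finset.univ_nonempty
  set q : ℝ → Fin K → ℝ := fun t k => E t k / S t with hq
  -- signs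
  set s : Fin K → ℝ := fun k => if 0 ≤ q 1 k - q 0 k then 1 else -1 with hs
  have hs1 : ∀ k, |s k| ≤ 1 := by
    intro k; simp only [hs]; split <;> simp
  have hsabs : ∀ k, s k * (q 1 k - q 0 k) = |q 1 k - q 0 k| := by
    intro k; simp only [hs]; split
    · rw [abs_of_nonneg (by assumption)]; ring
    · rw [abs_of_neg (by linarith [not_le.mp (by assumption)])]; ring
  set f : ℝ → ℝ := fun t => ∑ k, s k * q t k with hf
  -- derivatives
  have hEdiff : ∀ (t : ℝ) (k : Fin K), HasDerivAt (fun t => E t k) (u k * E t k) t := by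
    intro t k
    have h1 : HasDerivAt (fun t : ℝ => y k + t * u k) (u k) t := by
      simpa using ((hasDerivAt_mul_const (u k)).const_add (y k))
    have := h1.exp
    simpa [mul_comm] using this
  have hSdiff : ∀ t : ℝ, HasDerivAt S (∑ j, u j * E t j) t := by
    intro t
    exact HasDerivAt.fun_sum (fun j _ => hEdiff t j)
  set f' : ℝ → ℝ := fun t => ∑ k, s k *
      ((u k * E t k * S t - E t k * ∑ j, u j * E t j) / (S t) ^ 2) with hf'
  have hfdiff : ∀ t : ℝ, HasDerivAt f (f' t) t := by
    intro t
    apply HasDerivAt.fun_sum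
    intro k _
    exact ((hEdiff t k).div (hSdiff t) (ne_of_gt (hSpos t))).const_mul (s k)
  -- MVT
  obtain ⟨t, _, ht⟩ := exists_hasDerivAt_eq_slope f f' one_pos
    (fun x _ => (hfdiff x).continuousAt.continuousWithinAt)
    (fun x _ => hfdiff x)
  -- bound |f' t|
  have hbound : |f' t| ≤ c := by
    have hrw : f' t = ∑ k, s k * q t k * (u k - ∑ j, q t j * u j) := by
      apply Finset.sum_congr rfl
      intro k _
      have hS0 : S t ≠ 0 := ne_of_gt (hSpos t)
      have hsum : ∑ j, q t j * u j = (∑ j, u j * E t j) / S t := by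
        simp only [hq]
        rw [Finset.sum_div]
        exact Finset.sum_congr rfl fun j _ => by ring
      rw [hsum]
      have halg : ∀ a e Sv D : ℝ, Sv ≠ 0 →
          a * ((u k * e * Sv - e * D) / Sv ^ 2) = a * (e / Sv) * (u k - D / Sv) := by
        intro a e Sv D hSv; field_simp
      exact halg (s k) (E t k) (S t) (∑ j, u j * E t j) hS0
    rw [hrw]
    apply softmax_aux_alg K (q t) u s c
    · intro k; exact div_nonneg (Real.exp_pos _).le (hSpos t).le
    · simp only [hq, ← Finset.sum_div]; exact div_self (ne_of_gt (hSpos t))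
    · exact hc
    · exact hs1
  -- conclude
  have hq1 : ∀ k, q 1 k = Real.exp (x k) / ∑ j, Real.exp (x j) := by
    intro k; simp only [hq, hS, hE, hu]; norm_num
  have hq0 : ∀ k, q 0 k = Real.exp (y k) / ∑ j, Real.exp (y j) := by
    intro k; simp only [hq, hS, hE, hu]; norm_num
  have key : ∑ k, |q 1 k - q 0 k| ≤ c := by
    have : ∑ k, |q 1 k - q 0 k| = f 1 - f 0 := by
      simp only [hf, ← Finset.sum_sub_distrib, ← hsabs]
      apply Finset.sum_congr rfl; intro k _; ring
    rw [this]
    have : f' t = f 1 - f 0 := by rw [ht]; norm_num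
    calc f 1 - f 0 = f' t := this.symm
      _ ≤ |f' t| := le_abs_self _
      _ ≤ c := hbound
  calc ∑ k, |Real.exp (x k) / (∑ j, Real.exp (x j)) -
          Real.exp (y k) / (∑ j, Real.exp (y j))| = ∑ k, |q 1 k - q 0 k| := by
        apply Finset.sum_congr rfl; intro k _; rw [hq1, hq0]
    _ ≤ c := key

/-- `softmax_β` is `(1/β)`-Lipschitz from `(ℝ^K, ‖·‖_∞)` to `(ℝ^K, ‖·‖₁)`:
`‖softmax_β(z) − softmax_β(z')‖₁ ≤ (1/β)‖z − z'‖_∞`. -/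
theorem softmax_lipschitz_inf_to_one (K : ℕ) [NeZero K] (β : ℝ) (hβ : 0 < β) :
    ∀ z z' : Fin K → ℝ,
      ∑ k, |Real.exp (z k / β) / (∑ j, Real.exp (z j / β)) -
            Real.exp (z' k / β) / (∑ j, Real.exp (z' j / β))|
        ≤ (1 / β) * Finset.univ.sup' Finset.univ_nonempty (fun k => |z k - z' k|) := by
  intro z z'
  apply softmax_key K (fun k => z k / β) (fun k => z' k / β)
  intro k
  have h1 : |z k / β - z' k / β| = |z k - z' k| / β := by
    rw [div_sub_div_same, abs_div, abs_of_pos hβ]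
  rw [h1, one_div, mul_comm, ← div_eq_mul_inv]
  gcongr
  exact Finset.le_sup' (fun k => |z k - z' k|) (Finset.mem_univ k)
end
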